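/- Transformation of potentials under simple Moutard transform (Proposition 1): with the notation of the simple Moutard transform, let ψ, ψ⁺ solve the direct and conjugate equations with purely imaginary potentials ω_{ψ,ψ⁺}, ω_{ψ,f₁⁺}, ω_{f₁,ψ⁺}, ω_{f₁,f₁⁺} (the last nonvanishing). Define ψ̃ = ψ - f₁·ω_{ψ,f₁⁺}/ω_{f₁,f₁⁺} and ψ̃⁺ = ψ⁺ - f₁⁺·ω_{f₁,ψ⁺}/ω_{f₁,f₁⁺}. Then the function ω̃ := (ω_{ψ,ψ⁺}·ω_{f₁,f₁⁺} - ω_{ψ,f₁⁺}·ω_{f₁,ψ⁺})/ω_{f₁,f₁⁺} satisfies ∂_z ω̃ = ψ̃ψ̃⁺ and ∂_z̄ ω̃ = -conj(ψ̃ψ̃⁺), i.e. ω̃ is a potential for the transformed pair (ψ̃, ψ̃⁺). -/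

import Mathlib

open Complex ComplexConjugate

/-- Wirtinger derivative ∂_z = (∂_x - i ∂_y)/2. -/
noncomputable def dz (f : ℂ → ℂ) (z : ℂ) : ℂ :=
  (fderiv ℝ f z 1 - Complex.I * fderiv ℝ f z Complex.I) / 2

/-- Wirtinger derivative ∂_z̄ = (∂_x + i ∂_y)/2. -/
noncomputable def dzbar (f : ℂ → ℂ) (z : ℂ) : ℂ :=
  (fderiv ℝ f z 1 + Complex.I * fderiv ℝ f z Complex.I) / 2

lemma dz_sub {f g : ℂ → ℂ} {z : ℂ} (hf : DifferentiableAt ℝ f z)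
    (hg : DifferentiableAt ℝ g z) :
    dz (fun w => f w - g w) z = dz f z - dz g z := by
  unfold dz
  rw [fderiv_fun_sub hf hg]
  simp
  ring

lemma dzbar_sub {f g : ℂ → ℂ} {z : ℂ} (hf : DifferentiableAt ℝ f z)
    (hg : DifferentiableAt ℝ g z) :
    dzbar (fun w => f w - g w) z = dzbar f z - dzbar g z := by
  unfold dzbar
  rw [fderiv_fun_sub hf hg]
  simp
  ring

lemma dz_mul {f g : ℂ → ℂ} {z : ℂ} (hf : DifferentiableAt ℝ f z)
    (hg : DifferentiableAt ℝ g z) :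
    dz (fun w => f w * g w) z = dz f z * g z + f z * dz g z := by
  unfold dz
  rw [fderiv_fun_mul hf hg]
  simp [smul_eq_mul]
  ring

lemma dzbar_mul {f g : ℂ → ℂ} {z : ℂ} (hf : DifferentiableAt ℝ f z)
    (hg : DifferentiableAt ℝ g z) :
    dzbar (fun w => f w * g w) z = dzbar f z * g z + f z * dzbar g z := by
  unfold dzbar
  rw [fderiv_fun_mul hf hg]
  simp [smul_eq_mul]
  ring

lemma fderiv_inv_comp {g : ℂ → ℂ} {z : ℂ} (hg : DifferentiableAt ℝ g z)
    (h0 : g z ≠ 0) (v : ℂ) :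
    fderiv ℝ (fun w => (g w)⁻¹) z v = -((g z)⁻¹ * fderiv ℝ g z v * (g z)⁻¹) := by
  have h1 : HasFDerivAt (fun w => (g w)⁻¹)
      ((-ContinuousLinearMap.mulLeftRight ℝ ℂ (g z)⁻¹ (g z)⁻¹).comp (fderiv ℝ g z)) z :=
    (hasFDerivAt_inv' h0).comp z hg.hasFDerivAt
  rw [h1.fderiv]
  simp [ContinuousLinearMap.mulLeftRight_apply]

lemma dz_inv {g : ℂ → ℂ} {z : ℂ} (hg : DifferentiableAt ℝ g z) (h0 : g z ≠ 0) :
    dz (fun w => (g w)⁻¹) z = -(dz g z / g z ^ 2) := by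
  unfold dz
  rw [fderiv_inv_comp hg h0, fderiv_inv_comp hg h0]
  field_simp
  ring

lemma dzbar_inv {g : ℂ → ℂ} {z : ℂ} (hg : DifferentiableAt ℝ g z) (h0 : g z ≠ 0) :
    dzbar (fun w => (g w)⁻¹) z = -(dzbar g z / g z ^ 2) := by
  unfold dzbar
  rw [fderiv_inv_comp hg h0, fderiv_inv_comp hg h0]
  field_simp
  ring
/-- Proposition 1: transformation of potentials under the simple
Moutard transform. -/
theorem moutard_transformed_potential
    (D : Set ℂ) (hD : IsOpen D) (u f₁ f₁p ψ ψp ωff ωψf ωfψ ωψψ : ℂ → ℂ)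
    (hu : ContDiffOn ℝ 1 u D) (hf₁ : ContDiffOn ℝ 1 f₁ D)
    (hf₁p : ContDiffOn ℝ 1 f₁p D) (hψC : ContDiffOn ℝ 1 ψ D)
    (hψpC : ContDiffOn ℝ 1 ψp D)
    (hωffC : ContDiffOn ℝ 1 ωff D) (hωψfC : ContDiffOn ℝ 1 ωψf D)
    (hωfψC : ContDiffOn ℝ 1 ωfψ D) (hωψψC : ContDiffOn ℝ 1 ωψψ D)
    (hf : ∀ z ∈ D, dzbar f₁ z = u z * conj (f₁ z))
    (hfp : ∀ z ∈ D, dzbar f₁p z = -conj (u z) * conj (f₁p z))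
    (hψ : ∀ z ∈ D, dzbar ψ z = u z * conj (ψ z))
    (hψp : ∀ z ∈ D, dzbar ψp z = -conj (u z) * conj (ψp z))
    (hωff1 : ∀ z ∈ D, dz ωff z = f₁ z * f₁p z)
    (hωff2 : ∀ z ∈ D, dzbar ωff z = -conj (f₁ z * f₁p z))
    (hωffim : ∀ z ∈ D, (ωff z).re = 0)
    (hωψf1 : ∀ z ∈ D, dz ωψf z = ψ z * f₁p z)
    (hωψf2 : ∀ z ∈ D, dzbar ωψf z = -conj (ψ z * f₁p z))
    (hωψfim : ∀ z ∈ D, (ωψf z).re = 0)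
    (hωfψ1 : ∀ z ∈ D, dz ωfψ z = f₁ z * ψp z)
    (hωfψ2 : ∀ z ∈ D, dzbar ωfψ z = -conj (f₁ z * ψp z))
    (hωfψim : ∀ z ∈ D, (ωfψ z).re = 0)
    (hωψψ1 : ∀ z ∈ D, dz ωψψ z = ψ z * ψp z)
    (hωψψ2 : ∀ z ∈ D, dzbar ωψψ z = -conj (ψ z * ψp z))
    (hωψψim : ∀ z ∈ D, (ωψψ z).re = 0)
    (hne : ∀ z ∈ D, ωff z ≠ 0) :
    ∀ z ∈ D,
      dz (fun w => (ωψψ w * ωff w - ωψf w * ωfψ w) / ωff w) z =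
        (ψ z - f₁ z * ωψf z / ωff z) * (ψp z - f₁p z * ωfψ z / ωff z) ∧
      dzbar (fun w => (ωψψ w * ωff w - ωψf w * ωfψ w) / ωff w) z =
        -conj ((ψ z - f₁ z * ωψf z / ωff z) *
          (ψp z - f₁p z * ωfψ z / ωff z)) := by
  intro z hz
  have hmem := hD.mem_nhds hz
  have dff : DifferentiableAt ℝ ωff z :=
    (hωffC.contDiffAt hmem).differentiableAt one_ne_zero
  have dψf : DifferentiableAt ℝ ωψf z :=
    (hωψfC.contDiffAt hmem).differentiableAt one_ne_zero
  have dfψ : DifferentiableAt ℝ ωfψ z :=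
    (hωfψC.contDiffAt hmem).differentiableAt one_ne_zero
  have dψψ : DifferentiableAt ℝ ωψψ z :=
    (hωψψC.contDiffAt hmem).differentiableAt one_ne_zero
  have h0 : ωff z ≠ 0 := hne z hz
  have dnum : DifferentiableAt ℝ (fun w => ωψψ w * ωff w - ωψf w * ωfψ w) z :=
    (dψψ.mul dff).sub (dψf.mul dfψ)
  have dinv : DifferentiableAt ℝ (fun w => (ωff w)⁻¹) z := dff.inv h0
  have keyz : dz (fun w => (ωψψ w * ωff w - ωψf w * ωfψ w) / ωff w) z =
      (dz ωψψ z * ωff z + ωψψ z * dz ωff z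
        - (dz ωψf z * ωfψ z + ωψf z * dz ωfψ z)) * (ωff z)⁻¹
      + (ωψψ z * ωff z - ωψf z * ωfψ z) * (-(dz ωff z / ωff z ^ 2)) := by
    simp only [div_eq_mul_inv]
    rw [dz_mul dnum dinv, dz_sub (f := fun w => ωψψ w * ωff w) (g := fun w => ωψf w * ωfψ w) (dψψ.mul dff) (dψf.mul dfψ),
      dz_mul dψψ dff, dz_mul dψf dfψ, dz_inv dff h0]
    ring
  have keyzb : dzbar (fun w => (ωψψ w * ωff w - ωψf w * ωfψ w) / ωff w) z =
      (dzbar ωψψ z * ωff z + ωψψ z * dzbar ωff z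
        - (dzbar ωψf z * ωfψ z + ωψf z * dzbar ωfψ z)) * (ωff z)⁻¹
      + (ωψψ z * ωff z - ωψf z * ωfψ z) * (-(dzbar ωff z / ωff z ^ 2)) := by
    simp only [div_eq_mul_inv]
    rw [dzbar_mul dnum dinv, dzbar_sub (f := fun w => ωψψ w * ωff w) (g := fun w => ωψf w * ωfψ w) (dψψ.mul dff) (dψf.mul dfψ),
      dzbar_mul dψψ dff, dzbar_mul dψf dfψ, dzbar_inv dff h0]
    ring
  have cff : conj (ωff z) = -ωff z := by
    apply Complex.ext <;> simp [hωffim z hz]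
  have cψf : conj (ωψf z) = -ωψf z := by
    apply Complex.ext <;> simp [hωψfim z hz]
  have cfψ : conj (ωfψ z) = -ωfψ z := by
    apply Complex.ext <;> simp [hωfψim z hz]
  constructor
  · rw [keyz, hωψψ1 z hz, hωff1 z hz, hωψf1 z hz, hωfψ1 z hz]
    field_simp
    ring
  · rw [keyzb, hωψψ2 z hz, hωff2 z hz, hωψf2 z hz, hωfψ2 z hz]
    simp only [map_mul, map_sub, map_div₀, cff, cψf, cfψ]
    field_simp
    ring
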